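/- Let f_1,...,f_n : ℝ^d → ℝ each be L-smooth (gradients L-Lipschitz). Fix θ, θ̄ ∈ ℝ^d, let I be a uniformly random b-subset of [n] and define the (first-order) SVRG direction v = (1/b)∑_{i∈I} ∇f_i(θ) − (1/b)∑_{i∈I} ∇f_i(θ̄) + ∇f(θ̄) where f = (1/n)∑ f_i. Then E[‖v − ∇f(θ)‖²] ≤ (4L²/b) ‖θ − θ̄‖². -/

import Mathlib

open Finset

lemma aux_card_filter {α : Type*} [DecidableEq α] (s t : Finset α) (ht : t ⊆ s) (b : ℕ) :
    ((Finset.powersetCard b s).filter (fun I => t ⊆ I)).card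
      = if t.card ≤ b then (s.card - t.card).choose (b - t.card) else 0 := by
  split_ifs with htb
  · rw [← Finset.card_sdiff_of_subset ht, ← Finset.card_powersetCard]
    apply Finset.card_nbij' (fun I => I \ t) (fun J => J ∪ t)
    · intro I hI
      simp only [Finset.mem_coe, Finset.mem_filter, Finset.mem_powersetCard] at hI
      obtain ⟨⟨hIs, hIb⟩, htI⟩ := hI
      simp only [Finset.mem_coe, Finset.mem_powersetCard]
      exact ⟨Finset.sdiff_subset_sdiff hIs Finset.Subset.rfl,
        by rw [Finset.card_sdiff_of_subset htI, hIb]⟩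
    · intro J hJ
      simp only [Finset.mem_coe, Finset.mem_powersetCard] at hJ
      obtain ⟨hJs, hJc⟩ := hJ
      have hdisj : Disjoint J t := Finset.disjoint_of_subset_left hJs Finset.sdiff_disjoint
      simp only [Finset.mem_coe, Finset.mem_filter, Finset.mem_powersetCard]
      refine ⟨⟨Finset.union_subset (hJs.trans (Finset.sdiff_subset)) ht, ?_⟩,
        Finset.subset_union_right⟩
      rw [Finset.card_union_of_disjoint hdisj, hJc]
      omega
    · intro I hI
      simp only [Finset.mem_coe, Finset.mem_filter, Finset.mem_powersetCard] at hI
      exact Finset.sdiff_union_of_subset hI.2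
    · intro J hJ
      simp only [Finset.mem_coe, Finset.mem_powersetCard] at hJ
      have hdisj : Disjoint J t := Finset.disjoint_of_subset_left hJ.1 Finset.sdiff_disjoint
      dsimp only
      rw [Finset.union_sdiff_right, Finset.sdiff_eq_self_of_disjoint hdisj]
  · rw [Finset.card_eq_zero, Finset.eq_empty_iff_forall_notMem]
    intro I hI
    simp only [Finset.mem_filter, Finset.mem_powersetCard] at hI
    have := Finset.card_le_card hI.2
    omega

lemma aux_swap {α M : Type*} [DecidableEq α] [Fintype α] [AddCommMonoid M] (b : ℕ)
    (t : α → α → M) :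
    ∑ I ∈ powersetCard b (univ : Finset α), ∑ i ∈ I, ∑ j ∈ I, t i j
      = ∑ i : α, ∑ j : α,
          (((powersetCard b (univ : Finset α)).filter (fun I => i ∈ I ∧ j ∈ I)).card) • t i j := by
  have step : ∀ I : Finset α, ∑ i ∈ I, ∑ j ∈ I, t i j
      = ∑ i : α, ∑ j : α, if i ∈ I ∧ j ∈ I then t i j else 0 := by
    intro I
    have h1 : ∀ i : α, (∑ j : α, if i ∈ I ∧ j ∈ I then t i j else 0)
        = if i ∈ I then ∑ j ∈ I, t i j else 0 := by
      intro i
      by_cases hi : i ∈ I <;> simp [hi, Finset.sum_ite_mem]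
    rw [Finset.sum_congr rfl (fun i _ => h1 i), Finset.sum_ite_mem, Finset.univ_inter]
  calc ∑ I ∈ powersetCard b (univ : Finset α), ∑ i ∈ I, ∑ j ∈ I, t i j
      = ∑ I ∈ powersetCard b (univ : Finset α), ∑ i : α, ∑ j : α,
          if i ∈ I ∧ j ∈ I then t i j else 0 := Finset.sum_congr rfl (fun I _ => step I)
    _ = ∑ i : α, ∑ j : α, ∑ I ∈ powersetCard b (univ : Finset α),
          if i ∈ I ∧ j ∈ I then t i j else 0 := by
        rw [Finset.sum_comm]
        exact Finset.sum_congr rfl (fun i _ => Finset.sum_comm)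
    _ = _ := by
        refine Finset.sum_congr rfl (fun i _ => Finset.sum_congr rfl (fun j _ => ?_))
        rw [Finset.sum_ite, Finset.sum_const, Finset.sum_const_zero, add_zero]
lemma aux_key {n b : ℕ} (hb : 0 < b) {H : Type*}
    [NormedAddCommGroup H] [InnerProductSpace ℝ H]
    (h : Fin n → H) (hsum : ∑ i, h i = 0) :
    ∑ I ∈ powersetCard b (univ : Finset (Fin n)), ‖∑ i ∈ I, h i‖ ^ 2
      ≤ ((n - 1).choose (b - 1) : ℝ) * ∑ i, ‖h i‖ ^ 2 := by
  set A : ℝ := ((n - 1).choose (b - 1) : ℝ) with hA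
  set B : ℝ := (if 2 ≤ b then ((n - 2).choose (b - 2) : ℝ) else 0) with hB
  have hBnn : 0 ≤ B := by rw [hB]; split_ifs <;> positivity
  have hexp : ∀ I : Finset (Fin n), (‖∑ i ∈ I, h i‖ : ℝ) ^ 2
      = ∑ i ∈ I, ∑ j ∈ I, (inner ℝ (h i) (h j) : ℝ) := by
    intro I
    rw [← real_inner_self_eq_norm_sq, sum_inner]
    exact Finset.sum_congr rfl fun i _ => inner_sum _ _ _
  rw [Finset.sum_congr rfl fun I _ => hexp I, aux_swap]
  -- compute the coefficient
  have hcard : ∀ i j : Fin n,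
      (((powersetCard b (univ : Finset (Fin n))).filter (fun I => i ∈ I ∧ j ∈ I)).card : ℝ)
        = if i = j then A else B := by
    intro i j
    have hpred : (fun I : Finset (Fin n) => i ∈ I ∧ j ∈ I) = fun I => ({i, j} : Finset (Fin n)) ⊆ I := by
      funext I
      simp [Finset.insert_subset_iff]
    have hfeq : (powersetCard b (univ : Finset (Fin n))).filter (fun I => i ∈ I ∧ j ∈ I)
        = (powersetCard b (univ : Finset (Fin n))).filter (fun I => ({i, j} : Finset (Fin n)) ⊆ I) := by
      apply Finset.filter_congr
      intro I _
      simp [Finset.insert_subset_iff]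
    rw [hfeq, aux_card_filter _ _ (Finset.subset_univ _)]
    by_cases hij : i = j
    · subst hij
      rw [show ({i, i} : Finset (Fin n)) = {i} by simp]
      simp only [Finset.card_singleton, Finset.card_univ, Fintype.card_fin, hA, if_true]
      rw [if_pos (by omega : 1 ≤ b)]
    · have hc2 : ({i, j} : Finset (Fin n)).card = 2 := Finset.card_pair hij
      rw [hc2, if_neg hij, hB, Finset.card_univ, Fintype.card_fin]
      split_ifs with h2
      · push_cast; ring
      · simp
  have hsplit : ∑ i : Fin n, ∑ j : Fin n,
      (((powersetCard b (univ : Finset (Fin n))).filter (fun I => i ∈ I ∧ j ∈ I)).card)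
        • (inner ℝ (h i) (h j) : ℝ)
      = (A - B) * ∑ i, ‖h i‖ ^ 2 + B * ∑ i : Fin n, ∑ j : Fin n, (inner ℝ (h i) (h j) : ℝ) := by
    have hterm : ∀ i j : Fin n,
        (((powersetCard b (univ : Finset (Fin n))).filter (fun I => i ∈ I ∧ j ∈ I)).card)
          • (inner ℝ (h i) (h j) : ℝ)
        = B * (inner ℝ (h i) (h j) : ℝ)
          + (if j = i then (A - B) * ‖h i‖ ^ 2 else 0) := by
      intro i j
      rw [nsmul_eq_mul, hcard i j]
      by_cases hij : i = j
      · subst hij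
        simp [real_inner_self_eq_norm_sq]
        ring
      · simp [hij, Ne.symm hij]
    simp only [hterm, Finset.sum_add_distrib, Finset.sum_ite_eq, Finset.sum_ite_eq',
      Finset.mem_univ, if_true]
    simp only [← Finset.mul_sum]
    ring
  rw [hsplit]
  have hzero : ∑ i : Fin n, ∑ j : Fin n, (inner ℝ (h i) (h j) : ℝ) = 0 := by
    have : ∑ i : Fin n, ∑ j : Fin n, (inner ℝ (h i) (h j) : ℝ)
        = (inner ℝ (∑ i, h i) (∑ j, h j) : ℝ) := by
      rw [sum_inner]
      exact Finset.sum_congr rfl fun i _ => (inner_sum _ _ _).symm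
    rw [this, hsum, inner_zero_left]
  rw [hzero, mul_zero, add_zero]
  have hS : 0 ≤ ∑ i, ‖h i‖ ^ 2 := Finset.sum_nonneg fun i _ => sq_nonneg _
  nlinarith

lemma aux_grad {n d : ℕ} (f : Fin n → EuclideanSpace ℝ (Fin d) → ℝ)
    (hdiff : ∀ i, Differentiable ℝ (f i)) (y : EuclideanSpace ℝ (Fin d)) :
    gradient (fun x => (n : ℝ)⁻¹ * ∑ j : Fin n, f j x) y
      = (n : ℝ)⁻¹ • ∑ j : Fin n, gradient (f j) y := by
  have hg : ∀ j, HasGradientAt (f j) (gradient (f j) y) y :=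
    fun j => ((hdiff j) y).hasGradientAt
  have hsum : HasGradientAt (fun x => ∑ j : Fin n, f j x)
      (∑ j : Fin n, gradient (f j) y) y := by
    simp only [hasGradientAt_iff_hasFDerivAt] at hg ⊢
    rw [map_sum]
    exact HasFDerivAt.fun_sum (fun j _ => hg j)
  have hsmul : HasGradientAt (fun x => (n : ℝ)⁻¹ * ∑ j : Fin n, f j x)
      ((n : ℝ)⁻¹ • ∑ j : Fin n, gradient (f j) y) y := by
    rw [hasGradientAt_iff_hasFDerivAt] at hsum ⊢
    have := hsum.const_smul ((n : ℝ)⁻¹)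
    have hf : (fun x => (n : ℝ)⁻¹ * ∑ j : Fin n, f j x) = (n : ℝ)⁻¹ • fun x => ∑ j : Fin n, f j x := by
      funext x; simp
    rw [hf]
    exact this.congr_fderiv (by simp)
  exact hsmul.gradient

/-- SVRG variance bound: the mean-squared deviation of the variance-reduced direction
from the true gradient is at most `4L²/b · ‖θ - θ̄‖²`. -/
theorem svrg_variance_bound (n d b : ℕ) (hb : 0 < b) (hbn : b ≤ n)
    (f : Fin n → EuclideanSpace ℝ (Fin d) → ℝ) (L : ℝ) (hL : 0 ≤ L)
    (hdiff : ∀ i, Differentiable ℝ (f i))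
    (hlip : ∀ i, ∀ x y : EuclideanSpace ℝ (Fin d),
      ‖gradient (f i) x - gradient (f i) y‖ ≤ L * ‖x - y‖)
    (θ θbar : EuclideanSpace ℝ (Fin d)) :
    ((Finset.powersetCard b (Finset.univ : Finset (Fin n))).card : ℝ)⁻¹ *
      ∑ I ∈ Finset.powersetCard b (Finset.univ : Finset (Fin n)),
        ‖((b : ℝ)⁻¹ • ∑ i ∈ I, gradient (f i) θ) - ((b : ℝ)⁻¹ • ∑ i ∈ I, gradient (f i) θbar)
          + gradient (fun x => (n : ℝ)⁻¹ * ∑ j : Fin n, f j x) θbar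
          - gradient (fun x => (n : ℝ)⁻¹ * ∑ j : Fin n, f j x) θ‖ ^ 2
    ≤ (4 * L ^ 2 / (b : ℝ)) * ‖θ - θbar‖ ^ 2 := by
  classical
  have hn : 0 < n := lt_of_lt_of_le hb hbn
  have hn0 : (n : ℝ) ≠ 0 := Nat.cast_ne_zero.mpr hn.ne'
  have hb0 : (b : ℝ) ≠ 0 := Nat.cast_ne_zero.mpr hb.ne'
  set g : Fin n → EuclideanSpace ℝ (Fin d) :=
    fun i => gradient (f i) θ - gradient (f i) θbar with hgdef
  set μ : EuclideanSpace ℝ (Fin d) := (n : ℝ)⁻¹ • ∑ i, g i with hμdef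
  set h : Fin n → EuclideanSpace ℝ (Fin d) := fun i => g i - μ with hhdef
  -- the h's sum to zero
  have hsum : ∑ i, h i = 0 := by
    have hnsmul : (n : ℕ) • μ = ∑ i, g i := by
      rw [hμdef, ← Nat.cast_smul_eq_nsmul ℝ, smul_smul, mul_inv_cancel₀ hn0, one_smul]
    simp only [hhdef, Finset.sum_sub_distrib, Finset.sum_const, Finset.card_univ,
      Fintype.card_fin, hnsmul, sub_self]
  -- each h is bounded by 2L‖θ - θbar‖
  have hgb : ∀ i, ‖g i‖ ≤ L * ‖θ - θbar‖ := fun i => hlip i θ θbar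
  have hμb : ‖μ‖ ≤ L * ‖θ - θbar‖ := by
    rw [hμdef, norm_smul]
    have h1 : ‖∑ i, g i‖ ≤ (n : ℝ) * (L * ‖θ - θbar‖) := by
      calc ‖∑ i, g i‖ ≤ ∑ i, ‖g i‖ := norm_sum_le _ _
        _ ≤ ∑ _i : Fin n, L * ‖θ - θbar‖ := Finset.sum_le_sum fun i _ => hgb i
        _ = (n : ℝ) * (L * ‖θ - θbar‖) := by
            rw [Finset.sum_const, Finset.card_univ, Fintype.card_fin, nsmul_eq_mul]
    calc ‖(n : ℝ)⁻¹‖ * ‖∑ i, g i‖ ≤ (n : ℝ)⁻¹ * ((n : ℝ) * (L * ‖θ - θbar‖)) := by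
          rw [Real.norm_eq_abs, abs_of_nonneg (by positivity)]
          exact mul_le_mul_of_nonneg_left h1 (by positivity)
      _ = L * ‖θ - θbar‖ := by field_simp
  have hhb : ∀ i, ‖h i‖ ≤ 2 * L * ‖θ - θbar‖ := by
    intro i
    calc ‖h i‖ = ‖g i - μ‖ := rfl
      _ ≤ ‖g i‖ + ‖μ‖ := norm_sub_le _ _
      _ ≤ L * ‖θ - θbar‖ + L * ‖θ - θbar‖ := add_le_add (hgb i) hμb
      _ = 2 * L * ‖θ - θbar‖ := by ring
  -- rewrite the summand
  have hrw : ∀ I ∈ Finset.powersetCard b (Finset.univ : Finset (Fin n)),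
      (((b : ℝ)⁻¹ • ∑ i ∈ I, gradient (f i) θ) - ((b : ℝ)⁻¹ • ∑ i ∈ I, gradient (f i) θbar)
          + gradient (fun x => (n : ℝ)⁻¹ * ∑ j : Fin n, f j x) θbar
          - gradient (fun x => (n : ℝ)⁻¹ * ∑ j : Fin n, f j x) θ)
        = (b : ℝ)⁻¹ • ∑ i ∈ I, h i := by
    intro I hI
    have hIcard : I.card = b := (Finset.mem_powersetCard.mp hI).2
    have hbsmul : (b : ℝ)⁻¹ • ((I.card : ℕ) • μ) = μ := by
      rw [← Nat.cast_smul_eq_nsmul ℝ, hIcard, smul_smul, inv_mul_cancel₀ hb0, one_smul]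
    rw [aux_grad f hdiff θbar, aux_grad f hdiff θ]
    calc ((b : ℝ)⁻¹ • ∑ i ∈ I, gradient (f i) θ) - ((b : ℝ)⁻¹ • ∑ i ∈ I, gradient (f i) θbar)
          + (n : ℝ)⁻¹ • ∑ j, gradient (f j) θbar - (n : ℝ)⁻¹ • ∑ j, gradient (f j) θ
        = ((b : ℝ)⁻¹ • ∑ i ∈ I, g i) - μ := by
          simp only [hgdef, hμdef, Finset.sum_sub_distrib, smul_sub]
          abel
      _ = (b : ℝ)⁻¹ • ∑ i ∈ I, h i := by
          simp only [hhdef, Finset.sum_sub_distrib, smul_sub, Finset.sum_const, hbsmul]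
  rw [Finset.sum_congr rfl fun I hI => by rw [hrw I hI]]
  -- pull out the (b)⁻¹ factor
  have hnorm : ∀ I : Finset (Fin n),
      ‖(b : ℝ)⁻¹ • ∑ i ∈ I, h i‖ ^ 2 = ((b : ℝ)⁻¹) ^ 2 * ‖∑ i ∈ I, h i‖ ^ 2 := by
    intro I
    rw [norm_smul, Real.norm_eq_abs, abs_of_nonneg (by positivity), mul_pow]
  rw [Finset.sum_congr rfl fun I _ => hnorm I, ← Finset.mul_sum]
  -- apply the key lemma
  have hkey := aux_key (n := n) (b := b) hb h hsum
  have hhsq : ∑ i, ‖h i‖ ^ 2 ≤ (n : ℝ) * (2 * L * ‖θ - θbar‖) ^ 2 := by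
    calc ∑ i, ‖h i‖ ^ 2 ≤ ∑ _i : Fin n, (2 * L * ‖θ - θbar‖) ^ 2 :=
          Finset.sum_le_sum fun i _ =>
            pow_le_pow_left₀ (norm_nonneg _) (hhb i) 2
      _ = (n : ℝ) * (2 * L * ‖θ - θbar‖) ^ 2 := by
          rw [Finset.sum_const, Finset.card_univ, Fintype.card_fin, nsmul_eq_mul]
  have hA0 : (0:ℝ) ≤ ((n - 1).choose (b - 1) : ℝ) := by positivity
  have hchain : ∑ I ∈ Finset.powersetCard b (Finset.univ : Finset (Fin n)),
      ‖∑ i ∈ I, h i‖ ^ 2 ≤ ((n - 1).choose (b - 1) : ℝ) * ((n : ℝ) * (2 * L * ‖θ - θbar‖) ^ 2) :=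
    hkey.trans (mul_le_mul_of_nonneg_left hhsq hA0)
  -- final arithmetic
  rw [Finset.card_powersetCard, Finset.card_univ, Fintype.card_fin]
  have hid : (n : ℝ) * ((n - 1).choose (b - 1) : ℝ) = (n.choose b : ℝ) * (b : ℝ) := by
    have := Nat.add_one_mul_choose_eq (n - 1) (b - 1)
    rw [show n - 1 + 1 = n from by omega, show b - 1 + 1 = b from by omega] at this
    exact_mod_cast this
  have hC0 : (0:ℝ) < (n.choose b : ℝ) := by
    exact_mod_cast Nat.choose_pos hbn
  have hfac : (0:ℝ) ≤ ((n.choose b : ℝ))⁻¹ * ((b : ℝ)⁻¹) ^ 2 := by positivity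
  calc ((n.choose b : ℝ))⁻¹ * (((b : ℝ)⁻¹) ^ 2 *
        ∑ I ∈ Finset.powersetCard b (Finset.univ : Finset (Fin n)), ‖∑ i ∈ I, h i‖ ^ 2)
      ≤ ((n.choose b : ℝ))⁻¹ * (((b : ℝ)⁻¹) ^ 2 *
        (((n - 1).choose (b - 1) : ℝ) * ((n : ℝ) * (2 * L * ‖θ - θbar‖) ^ 2))) := by
        rw [← mul_assoc, ← mul_assoc]
        exact mul_le_mul_of_nonneg_left hchain hfac
    _ = (4 * L ^ 2 / (b : ℝ)) * ‖θ - θbar‖ ^ 2 := by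
        have hx : ((n - 1).choose (b - 1) : ℝ) = (n.choose b : ℝ) * (b : ℝ) / (n : ℝ) := by
          field_simp at hid ⊢
          linarith [hid]
        rw [hx]
        field_simp
        ring
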